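/- arXiv:2408.04266 — 2 statements merged into one kernel-verified Lean document; each statement's English description precedes it below -/
import Mathlib

section
/- Let T > 0 and x₀, v₀, x_f ∈ ℝ³. Define the cubic curve p : [0,T] → ℝ³ by p(t) = Σ_{i=0}^{3} Q_i · b_{3,i}(t/T) with control points Q₀ = x₀, Q₁ = x₀ + (T/3)v₀, Q₂ = (1/2)x₀ + (1/2)x_f + (T/6)v₀, Q₃ = x_f. Then p(0) = x₀, p′(0) = v₀, p(T) = x_f, and for every twice continuously differentiable curve y : [0,T] → ℝ³ with y(0) = x₀, y′(0) = v₀ and y(T) = x_f, we have ∫₀ᵀ ‖p″(t)‖² dt ≤ ∫₀ᵀ ‖y″(t)‖² dt. -/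
open Set intervalIntegral

lemma key_ibp (T : ℝ) (hT : 0 < T) (x₀ v₀ xf d : EuclideanSpace ℝ (Fin 3))
    (w : ℝ → EuclideanSpace ℝ (Fin 3)) (hw : ContDiffOn ℝ 2 w (Set.Icc 0 T))
    (h0 : w 0 = x₀) (h0' : derivWithin w (Set.Icc 0 T) 0 = v₀) (hTf : w T = xf) :
    ∫ t in (0:ℝ)..T, (T - t) * (inner ℝ d (iteratedDerivWithin 2 w (Set.Icc 0 T) t) : ℝ) =
      (inner ℝ d xf : ℝ) - inner ℝ d x₀ - T * (inner ℝ d v₀ : ℝ) := by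
  set s : Set ℝ := Set.Icc 0 T with hs_def
  have hs : UniqueDiffOn ℝ s := uniqueDiffOn_Icc hT
  set w1 := derivWithin w s with hw1_def
  set w2 := derivWithin w1 s with hw2_def
  have hcw1 : ContDiffOn ℝ 1 w1 s := hw.derivWithin hs (by norm_num)
  -- iterated deriv = w2 on s
  have hit2 : ∀ t ∈ s, iteratedDerivWithin 2 w s t = w2 t := by
    intro t ht
    rw [iteratedDerivWithin_succ]
    exact derivWithin_congr (fun u hu => congrFun iteratedDerivWithin_one u)
      (congrFun iteratedDerivWithin_one t)
  -- G and its derivative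
  set h : ℝ → ℝ := fun t => (inner ℝ d (w t) : ℝ) with hh_def
  set h1 : ℝ → ℝ := fun t => (inner ℝ d (w1 t) : ℝ) with hh1_def
  set G : ℝ → ℝ := fun t => (T - t) * h1 t + h t with hG_def
  have hGderiv : ∀ t ∈ Set.Ioo (0:ℝ) T, HasDerivAt G ((T - t) * (inner ℝ d (w2 t) : ℝ)) t := by
    intro t ht
    have hts : t ∈ s := Set.mem_Icc_of_Ioo ht
    have hnhds : s ∈ nhds t := Icc_mem_nhds ht.1 ht.2
    have hdw : HasDerivAt w (w1 t) t := by
      have := ((hw.differentiableOn (by norm_num) t hts).differentiableAt hnhds).hasDerivAt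
      rwa [← derivWithin_of_mem_nhds hnhds] at this
    have hdw1 : HasDerivAt w1 (w2 t) t := by
      have := ((hcw1.differentiableOn (by norm_num) t hts).differentiableAt hnhds).hasDerivAt
      rwa [← derivWithin_of_mem_nhds hnhds] at this
    have hh : HasDerivAt h ((inner ℝ d (w1 t) : ℝ)) t := by
      have := (hasDerivAt_const t d).inner ℝ hdw
      simpa using this
    have hh1 : HasDerivAt h1 ((inner ℝ d (w2 t) : ℝ)) t := by
      have := (hasDerivAt_const t d).inner ℝ hdw1
      simpa using this
    have heq : (T - t) * (inner ℝ d (w2 t) : ℝ) =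
        (0 - 1) * h1 t + (T - t) * (inner ℝ d (w2 t) : ℝ) + (inner ℝ d (w1 t) : ℝ) := by
      simp only [hh1_def]; ring
    rw [heq]
    exact (((hasDerivAt_const t T).sub (hasDerivAt_id t)).mul hh1).add hh
  have hhcont : ContinuousOn h s := continuousOn_const.inner hw.continuousOn
  have hh1cont : ContinuousOn h1 s := continuousOn_const.inner hcw1.continuousOn
  have hGcont : ContinuousOn G s :=
    ((continuousOn_const.sub continuousOn_id).mul hh1cont).add hhcont
  have hicont : ContinuousOn (fun t => (T - t) * (inner ℝ d (iteratedDerivWithin 2 w s t) : ℝ)) s :=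
    (continuousOn_const.sub continuousOn_id).mul
      (continuousOn_const.inner (hw.continuousOn_iteratedDerivWithin le_rfl hs))
  have hint : IntervalIntegrable
      (fun t => (T - t) * (inner ℝ d (iteratedDerivWithin 2 w s t) : ℝ)) MeasureTheory.volume 0 T := by
    apply ContinuousOn.intervalIntegrable
    rwa [Set.uIcc_of_le hT.le]
  have hftc := integral_eq_sub_of_hasDeriv_right_of_le hT.le hGcont
    (fun t ht => by
      have := hGderiv t ht
      rw [← hit2 t (Set.mem_Icc_of_Ioo ht)] at this
      exact this.hasDerivWithinAt) hint
  rw [hftc]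
  have h10 : h1 0 = (inner ℝ d v₀ : ℝ) := by simp only [hh1_def, h0']
  simp only [hG_def, hh_def, h10, hTf, h0, sub_self, zero_mul, zero_add, sub_zero]
  ring


/-- The `i`-th Bernstein basis polynomial of degree `n`, evaluated at `t`. -/
def bern (n i : ℕ) (t : ℝ) : ℝ := (n.choose i : ℝ) * t ^ i * (1 - t) ^ (n - i)

theorem stmt_10 (T : ℝ) (hT : 0 < T) (x₀ v₀ xf : EuclideanSpace ℝ (Fin 3))
    (p : ℝ → EuclideanSpace ℝ (Fin 3))
    (hp : p = fun t => ∑ i : Fin 4, bern 3 i.val (t / T) •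
      ![x₀,
        x₀ + (T / 3) • v₀,
        (1 / 2 : ℝ) • x₀ + (1 / 2 : ℝ) • xf + (T / 6) • v₀,
        xf] i) :
    p 0 = x₀ ∧ deriv p 0 = v₀ ∧ p T = xf ∧
      ∀ y : ℝ → EuclideanSpace ℝ (Fin 3),
        ContDiffOn ℝ 2 y (Set.Icc 0 T) →
        y 0 = x₀ → derivWithin y (Set.Icc 0 T) 0 = v₀ → y T = xf →
        ∫ t in (0 : ℝ)..T, ‖iteratedDeriv 2 p t‖ ^ 2 ≤
          ∫ t in (0 : ℝ)..T, ‖iteratedDerivWithin 2 y (Set.Icc 0 T) t‖ ^ 2 := by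
  have hT' : T ≠ 0 := ne_of_gt hT
  obtain ⟨d, hd_def⟩ : ∃ d : EuclideanSpace ℝ (Fin 3), d = xf - x₀ - T • v₀ := ⟨_, rfl⟩
  obtain ⟨a, ha_def⟩ : ∃ a : ℝ, a = 3 / (2 * T ^ 2) := ⟨_, rfl⟩
  obtain ⟨b, hb_def⟩ : ∃ b : ℝ, b = -(1 / (2 * T ^ 3)) := ⟨_, rfl⟩
  -- closed form for p
  have hpoly : p = fun t => x₀ + t • v₀ + (a * t ^ 2 + b * t ^ 3) • d := by
    rw [hp]; funext t
    norm_num [Fin.sum_univ_four, bern,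
      show ((0:Fin 4).val)=0 from rfl, show ((1:Fin 4).val)=1 from rfl,
      show ((2:Fin 4).val)=2 from rfl, show ((3:Fin 4).val)=3 from rfl]
    rw [hd_def, ha_def, hb_def]
    ext i
    simp only [Matrix.cons_val_two, Matrix.cons_val_three, Matrix.tail_cons, Matrix.head_cons]
    simp only [PiLp.add_apply, PiLp.smul_apply, PiLp.sub_apply, smul_eq_mul]
    field_simp
    ring
  -- derivative of p
  have hp' : ∀ t : ℝ, HasDerivAt p (v₀ + (a * (2 * t) + b * (3 * t ^ 2)) • d) t := by
    intro t
    rw [hpoly]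
    have hf : HasDerivAt (fun t : ℝ => a * t ^ 2 + b * t ^ 3)
        (a * (2 * t) + b * (3 * t ^ 2)) t := by
      have := ((hasDerivAt_pow 2 t).const_mul a).add ((hasDerivAt_pow 3 t).const_mul b)
      exact this.congr_deriv (by push_cast; ring)
    have := ((hasDerivAt_const t x₀).add ((hasDerivAt_id t).smul_const v₀)).add
      (hf.smul_const d)
    exact this.congr_deriv (by simp)
  have hderiv_p : deriv p = fun t => v₀ + (a * (2 * t) + b * (3 * t ^ 2)) • d := by
    funext t; exact (hp' t).deriv
  -- second derivative
  have hp2 : iteratedDeriv 2 p = fun t => (a * 2 + b * (6 * t)) • d := by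
    rw [iteratedDeriv_succ, iteratedDeriv_one, hderiv_p]
    funext t
    have hf : HasDerivAt (fun t : ℝ => a * (2 * t) + b * (3 * t ^ 2))
        (a * 2 + b * (6 * t)) t := by
      have := (((hasDerivAt_id t).const_mul 2).const_mul a).add
        (((hasDerivAt_pow 2 t).const_mul 3).const_mul b)
      exact this.congr_deriv (by push_cast; ring)
    have hd2 : HasDerivAt (fun t => v₀ + (a * (2 * t) + b * (3 * t ^ 2)) • d)
        (0 + (a * 2 + b * (6 * t)) • d) t := (hasDerivAt_const t v₀).add (hf.smul_const d)
    rw [hd2.deriv, zero_add]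
  obtain ⟨c, hc_def⟩ : ∃ c : ℝ, c = 3 / T ^ 3 := ⟨_, rfl⟩
  have hco : ∀ t : ℝ, a * 2 + b * (6 * t) = c * (T - t) := by
    intro t; rw [ha_def, hb_def, hc_def]; field_simp; ring
  refine ⟨by rw [hpoly]; simp, by rw [hderiv_p]; simp, by
      rw [hpoly, hd_def]
      have h1 : a * T ^ 2 + b * T ^ 3 = 1 := by rw [ha_def, hb_def]; field_simp; ring
      show x₀ + T • v₀ + (a * T ^ 2 + b * T ^ 3) • (xf - x₀ - T • v₀) = xf
      rw [h1]; module, ?_⟩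
  intro y hy hy0 hy0' hyT
  set s : Set ℝ := Set.Icc (0:ℝ) T with hs_def
  have hs : UniqueDiffOn ℝ s := uniqueDiffOn_Icc hT
  set Y : ℝ → EuclideanSpace ℝ (Fin 3) := iteratedDerivWithin 2 y s with hY_def
  set P : ℝ → EuclideanSpace ℝ (Fin 3) := fun t => (c * (T - t)) • d with hP_def
  have hP : iteratedDeriv 2 p = P := by
    rw [hp2]; funext t; rw [hco t]
  -- value of ∫ ‖P‖²
  have hPval : ∫ t in (0:ℝ)..T, ‖P t‖ ^ 2 = c * ‖d‖ ^ 2 := by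
    have h1 : ∀ t : ℝ, ‖P t‖ ^ 2 = c ^ 2 * ‖d‖ ^ 2 * (T - t) ^ 2 := by
      intro t
      rw [hP_def]
      simp only [norm_smul, mul_pow, Real.norm_eq_abs, sq_abs]
      ring
    simp only [h1]
    rw [intervalIntegral.integral_const_mul]
    have h2 : (∫ t in (0:ℝ)..T, (T - t) ^ 2) = T ^ 3 / 3 := by
      rw [intervalIntegral.integral_comp_sub_left (fun x => x ^ 2) T]
      simp [integral_pow]
      norm_num
    rw [h2, hc_def]; field_simp
  -- cross term
  have hibp := key_ibp T hT x₀ v₀ xf d y hy hy0 hy0' hyT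
  have hcross : ∫ t in (0:ℝ)..T, (inner ℝ (P t) (Y t) : ℝ) = c * ‖d‖ ^ 2 := by
    have h1 : ∀ t : ℝ, (inner ℝ (P t) (Y t) : ℝ) = c * ((T - t) * (inner ℝ d (Y t) : ℝ)) := by
      intro t; rw [hP_def]; simp only [real_inner_smul_left]; ring
    simp only [h1]
    rw [intervalIntegral.integral_const_mul, hibp]
    have h2 : (inner ℝ d (xf - x₀ - T • v₀) : ℝ)
        = (inner ℝ d xf : ℝ) - inner ℝ d x₀ - T * (inner ℝ d v₀ : ℝ) := by
      simp [inner_sub_right, inner_smul_right]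
    rw [← h2, ← hd_def, real_inner_self_eq_norm_sq]
  -- integrability
  have hYc : ContinuousOn Y s := hy.continuousOn_iteratedDerivWithin le_rfl hs
  have hPc : Continuous P := by
    rw [hP_def]; exact (continuous_const.mul (continuous_const.sub continuous_id)).smul
      continuous_const
  have huIcc : Set.uIcc (0:ℝ) T = s := Set.uIcc_of_le hT.le
  have hIY : IntervalIntegrable (fun t => ‖Y t‖ ^ 2) MeasureTheory.volume 0 T := by
    apply ContinuousOn.intervalIntegrable; rw [huIcc]; exact (hYc.norm).pow 2
  have hIP : IntervalIntegrable (fun t => ‖P t‖ ^ 2) MeasureTheory.volume 0 T :=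
    ((hPc.norm.pow 2)).intervalIntegrable 0 T
  have hIPY : IntervalIntegrable (fun t => (inner ℝ (P t) (Y t) : ℝ)) MeasureTheory.volume 0 T := by
    apply ContinuousOn.intervalIntegrable; rw [huIcc]
    exact hPc.continuousOn.inner hYc
  -- expand the square
  have hexp : ∀ t : ℝ, ‖Y t - P t‖ ^ 2 =
      ‖Y t‖ ^ 2 - 2 * (inner ℝ (P t) (Y t) : ℝ) + ‖P t‖ ^ 2 := by
    intro t
    rw [norm_sub_sq_real, real_inner_comm]
  have hnonneg : (0:ℝ) ≤ ∫ t in (0:ℝ)..T, ‖Y t - P t‖ ^ 2 :=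
    intervalIntegral.integral_nonneg hT.le (fun t _ => by positivity)
  have hsplit : ∫ t in (0:ℝ)..T, ‖Y t - P t‖ ^ 2 =
      (∫ t in (0:ℝ)..T, ‖Y t‖ ^ 2) - 2 * (∫ t in (0:ℝ)..T, (inner ℝ (P t) (Y t) : ℝ))
        + ∫ t in (0:ℝ)..T, ‖P t‖ ^ 2 := by
    simp only [hexp]
    rw [intervalIntegral.integral_add (hIY.sub ((hIPY.const_mul 2))) hIP,
      intervalIntegral.integral_sub hIY (hIPY.const_mul 2),
      intervalIntegral.integral_const_mul]
  rw [hP]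
  have := hsplit
  rw [hcross, hPval] at this
  linarith [hnonneg, this.symm.le]
end

section
/- Let T > 0 and x₀, v₀, a₀, x_f ∈ ℝ³. Define the quintic curve p : [0,T] → ℝ³ by p(t) = Σ_{i=0}^{5} C_i · b_{5,i}(t/T) with control points C₀ = x₀, C₁ = x₀ + (T/5)v₀, C₂ = x₀ + (2T/5)v₀ + (T²/20)a₀, C₃ = (5/6)x₀ + (1/6)x_f + (13T/30)v₀ + (T²/15)a₀, C₄ = (1/2)x₀ + (1/2)x_f + (3T/10)v₀ + (T²/20)a₀, C₅ = x_f. Then p(0) = x₀, p′(0) = v₀, p″(0) = a₀, p(T) = x_f, and for every three-times continuously differentiable curve y : [0,T] → ℝ³ with y(0) = x₀, y′(0) = v₀, y″(0) = a₀ and y(T) = x_f, we have ∫₀ᵀ ‖p‴(t)‖² dt ≤ ∫₀ᵀ ‖y‴(t)‖² dt. -/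
open scoped RealInnerProductSpace

theorem stmt_11 (T : ℝ) (hT : 0 < T) (x₀ v₀ a₀ xf : EuclideanSpace ℝ (Fin 3))
    (p : ℝ → EuclideanSpace ℝ (Fin 3))
    (hp : p = fun t => ∑ i : Fin 6, bern 5 i.val (t / T) •
      ![x₀,
        x₀ + (T / 5) • v₀,
        x₀ + (2 * T / 5) • v₀ + (T ^ 2 / 20) • a₀,
        (5 / 6 : ℝ) • x₀ + (1 / 6 : ℝ) • xf + (13 * T / 30) • v₀ + (T ^ 2 / 15) • a₀,
        (1 / 2 : ℝ) • x₀ + (1 / 2 : ℝ) • xf + (3 * T / 10) • v₀ + (T ^ 2 / 20) • a₀,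
        xf] i) :
    p 0 = x₀ ∧ deriv p 0 = v₀ ∧ iteratedDeriv 2 p 0 = a₀ ∧ p T = xf ∧
      ∀ y : ℝ → EuclideanSpace ℝ (Fin 3),
        ContDiffOn ℝ 3 y (Set.Icc 0 T) →
        y 0 = x₀ → derivWithin y (Set.Icc 0 T) 0 = v₀ →
        iteratedDerivWithin 2 y (Set.Icc 0 T) 0 = a₀ → y T = xf →
        ∫ t in (0 : ℝ)..T, ‖iteratedDeriv 3 p t‖ ^ 2 ≤
          ∫ t in (0 : ℝ)..T, ‖iteratedDerivWithin 3 y (Set.Icc 0 T) t‖ ^ 2 := by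
  have hT0 : T ≠ 0 := ne_of_gt hT
  set D : EuclideanSpace ℝ (Fin 3) := xf - x₀ - T • v₀ - (T^2/2) • a₀ with hD
  set g0 : ℝ → ℝ := fun t => (t^5 - 5*T*t^4 + 10*T^2*t^3) / (6*T^5) with hg0
  set g1 : ℝ → ℝ := fun t => (5*t^4 - 20*T*t^3 + 30*T^2*t^2) / (6*T^5) with hg1
  set g2 : ℝ → ℝ := fun t => (20*t^3 - 60*T*t^2 + 60*T^2*t) / (6*T^5) with hg2
  set g3 : ℝ → ℝ := fun t => (60*t^2 - 120*T*t + 60*T^2) / (6*T^5) with hg3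
  set q : ℝ → EuclideanSpace ℝ (Fin 3) := fun t => x₀ + t • v₀ + (t^2/2) • a₀ + g0 t • D with hq
  set q1 : ℝ → EuclideanSpace ℝ (Fin 3) := fun t => v₀ + t • a₀ + g1 t • D with hq1
  set q2 : ℝ → EuclideanSpace ℝ (Fin 3) := fun t => a₀ + g2 t • D with hq2
  set q3 : ℝ → EuclideanSpace ℝ (Fin 3) := fun t => g3 t • D with hq3
  -- closed form for p
  have hpq : p = q := by
    funext t
    rw [hp, hq]
    obtain ⟨s, rfl⟩ : ∃ s, t = s * T := ⟨t / T, by field_simp⟩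
    have hsT : s * T / T = s := by field_simp
    have hg : g0 (s*T) = (s^5 - 5*s^4 + 10*s^3)/6 := by
      rw [hg0]; field_simp
    simp only [Fin.sum_univ_six, bern, Matrix.cons_val_zero, Matrix.cons_val_one, Matrix.head_cons,
      Matrix.cons_val_two, Matrix.tail_cons, Matrix.cons_val_three, Matrix.cons_val_four,
      Fin.val_zero, Fin.val_one,
      show ((2:Fin 6):ℕ) = 2 from rfl, show ((3:Fin 6):ℕ) = 3 from rfl,
      show ((4:Fin 6):ℕ) = 4 from rfl, show ((5:Fin 6):ℕ) = 5 from rfl,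
      show ![x₀, x₀ + (T / 5) • v₀, x₀ + (2 * T / 5) • v₀ + (T ^ 2 / 20) • a₀,
          (5 / 6 : ℝ) • x₀ + (1 / 6 : ℝ) • xf + (13 * T / 30) • v₀ + (T ^ 2 / 15) • a₀,
          (1 / 2 : ℝ) • x₀ + (1 / 2 : ℝ) • xf + (3 * T / 10) • v₀ + (T ^ 2 / 20) • a₀,
          xf] 5 = xf from rfl, hsT, hg, hD]
    norm_num [Nat.choose]
    module
  -- scalar derivatives
  have hd0 : ∀ t, HasDerivAt g0 (g1 t) t := by
    intro t
    have h : HasDerivAt (fun t : ℝ => t^5 - 5*T*t^4 + 10*T^2*t^3)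
        (5*t^4 - 20*T*t^3 + 30*T^2*t^2) t := by
      have := ((hasDerivAt_pow 5 t).sub ((hasDerivAt_pow 4 t).const_mul (5*T))).add
        ((hasDerivAt_pow 3 t).const_mul (10*T^2))
      refine this.congr_deriv ?_
      push_cast; ring
    exact h.div_const _
  have hd1 : ∀ t, HasDerivAt g1 (g2 t) t := by
    intro t
    have h : HasDerivAt (fun t : ℝ => 5*t^4 - 20*T*t^3 + 30*T^2*t^2)
        (20*t^3 - 60*T*t^2 + 60*T^2*t) t := by
      have := (((hasDerivAt_pow 4 t).const_mul 5).sub ((hasDerivAt_pow 3 t).const_mul (20*T))).add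
        ((hasDerivAt_pow 2 t).const_mul (30*T^2))
      refine this.congr_deriv ?_
      push_cast; ring
    exact h.div_const _
  have hd2 : ∀ t, HasDerivAt g2 (g3 t) t := by
    intro t
    have h : HasDerivAt (fun t : ℝ => 20*t^3 - 60*T*t^2 + 60*T^2*t)
        (60*t^2 - 120*T*t + 60*T^2) t := by
      have := (((hasDerivAt_pow 3 t).const_mul 20).sub ((hasDerivAt_pow 2 t).const_mul (60*T))).add
        ((hasDerivAt_id t).const_mul (60*T^2))
      refine this.congr_deriv ?_
      push_cast; ring
    exact h.div_const _
  -- vector derivatives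
  have hD0 : ∀ t, HasDerivAt q (q1 t) t := by
    intro t
    have := (((hasDerivAt_const t x₀).add ((hasDerivAt_id t).smul_const v₀)).add
      (((hasDerivAt_pow 2 t).div_const 2).smul_const a₀)).add ((hd0 t).smul_const D)
    refine this.congr_deriv ?_
    push_cast
    module
  have hD1 : ∀ t, HasDerivAt q1 (q2 t) t := by
    intro t
    have := (((hasDerivAt_const t v₀).add ((hasDerivAt_id t).smul_const a₀)).add
      ((hd1 t).smul_const D))
    refine this.congr_deriv ?_
    module
  have hD2 : ∀ t, HasDerivAt q2 (q3 t) t := by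
    intro t
    have := (hasDerivAt_const t a₀).add ((hd2 t).smul_const D)
    refine this.congr_deriv ?_
    module
  have hderiv1 : deriv p = q1 := by
    rw [hpq]; exact funext fun t => (hD0 t).deriv
  have hderiv2 : deriv q1 = q2 := funext fun t => (hD1 t).deriv
  have hderiv3 : deriv q2 = q3 := funext fun t => (hD2 t).deriv
  have hiter3 : iteratedDeriv 3 p = q3 := by
    show iteratedDeriv (2+1) p = q3
    rw [iteratedDeriv_succ, show (2:ℕ) = 1+1 from rfl, iteratedDeriv_succ, iteratedDeriv_one,
      hderiv1, hderiv2, hderiv3]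
  have hg00 : g0 0 = 0 := by rw [hg0]; norm_num
  have hg10 : g1 0 = 0 := by rw [hg1]; norm_num
  have hg20 : g2 0 = 0 := by rw [hg2]; norm_num
  have hg0T : g0 T = 1 := by rw [hg0]; field_simp; ring
  refine ⟨?_, ?_, ?_, ?_, ?_⟩
  · rw [hpq, hq]; simp [hg00]
  · rw [hderiv1, hq1]; simp [hg10]
  · rw [show (2:ℕ) = 1+1 from rfl, iteratedDeriv_succ, iteratedDeriv_one, hderiv1, hderiv2,
      hq2]; simp [hg20]
  · rw [hpq, hq]; simp only [hg0T, one_smul, hD]; module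
  -- main optimality part
  intro y hy hy0 hy1v hy2a hyT
  have hpT : q T = xf := by rw [hq]; simp only [hg0T, one_smul, hD]; module
  set I : Set ℝ := Set.Icc (0:ℝ) T with hI'
  have hI : UniqueDiffOn ℝ I := uniqueDiffOn_Icc hT
  have h0I : (0:ℝ) ∈ I := Set.left_mem_Icc.2 hT.le
  have hTI : T ∈ I := Set.right_mem_Icc.2 hT.le
  set y1 : ℝ → EuclideanSpace ℝ (Fin 3) := iteratedDerivWithin 1 y I with hy1'
  set y2 : ℝ → EuclideanSpace ℝ (Fin 3) := iteratedDerivWithin 2 y I with hy2'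
  set y3 : ℝ → EuclideanSpace ℝ (Fin 3) := iteratedDerivWithin 3 y I with hy3'
  have hy10 : y1 0 = v₀ := by rw [hy1', iteratedDerivWithin_one]; exact hy1v
  have hy20 : y2 0 = a₀ := hy2a
  have hmem : ∀ t ∈ Set.Ioo (0:ℝ) T, I ∈ nhds t := fun t ht => Icc_mem_nhds ht.1 ht.2
  have hsub : Set.Ioo (0:ℝ) T ⊆ I := Set.Ioo_subset_Icc_self
  have hyd0 : ∀ t ∈ Set.Ioo (0:ℝ) T, HasDerivAt y (y1 t) t := by
    intro t ht
    have h := ((hy.differentiableOn (by norm_num) t (hsub ht)).hasDerivWithinAt).hasDerivAt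
      (hmem t ht)
    rwa [← iteratedDerivWithin_one] at h
  have hyd1 : ∀ t ∈ Set.Ioo (0:ℝ) T, HasDerivAt y1 (y2 t) t := by
    intro t ht
    have h := (((hy.differentiableOn_iteratedDerivWithin (m := 1) (by norm_num) hI)
      t (hsub ht)).hasDerivWithinAt).hasDerivAt (hmem t ht)
    rwa [← iteratedDerivWithin_succ] at h
  have hyd2 : ∀ t ∈ Set.Ioo (0:ℝ) T, HasDerivAt y2 (y3 t) t := by
    intro t ht
    have h := (((hy.differentiableOn_iteratedDerivWithin (m := 2) (by norm_num) hI)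
      t (hsub ht)).hasDerivWithinAt).hasDerivAt (hmem t ht)
    rwa [← iteratedDerivWithin_succ] at h
  -- continuity
  have hc0 : ContinuousOn y I := hy.continuousOn
  have hc1 : ContinuousOn y1 I := hy.continuousOn_iteratedDerivWithin (by norm_num) hI
  have hc2 : ContinuousOn y2 I := hy.continuousOn_iteratedDerivWithin (by norm_num) hI
  have hc3 : ContinuousOn y3 I := hy.continuousOn_iteratedDerivWithin (by norm_num) hI
  have hq0c : Continuous q := continuous_iff_continuousAt.2 fun t => (hD0 t).continuousAt
  have hq1c : Continuous q1 := continuous_iff_continuousAt.2 fun t => (hD1 t).continuousAt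
  have hq2c : Continuous q2 := continuous_iff_continuousAt.2 fun t => (hD2 t).continuousAt
  have hg3c : Continuous g3 := by rw [hg3]; fun_prop
  have hq3c : Continuous q3 := by rw [hq3]; exact hg3c.smul continuous_const
  -- the potential function for integration by parts
  set c : ℝ := 10 / T^5 with hc
  have hg3eq : ∀ t, g3 t = c * (t - T)^2 := by
    intro t; rw [hg3, hc]; field_simp; ring
  set G : ℝ → ℝ := fun u => c*(u-T)^2 * ⟪D, y2 u - q2 u⟫ - 2*c*(u-T) * ⟪D, y1 u - q1 u⟫
    + 2*c * ⟪D, y u - q u⟫ with hG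
  set W : ℝ → ℝ := fun u => c*(u-T)^2 * ⟪D, y3 u - q3 u⟫ with hW
  have hGd : ∀ t ∈ Set.Ioo (0:ℝ) T, HasDerivAt G (W t) t := by
    intro t ht
    have hE0 : HasDerivAt (fun u => y u - q u) (y1 t - q1 t) t := (hyd0 t ht).sub (hD0 t)
    have hE1 : HasDerivAt (fun u => y1 u - q1 u) (y2 t - q2 t) t := (hyd1 t ht).sub (hD1 t)
    have hE2 : HasDerivAt (fun u => y2 u - q2 u) (y3 t - q3 t) t := (hyd2 t ht).sub (hD2 t)
    have hI0 : HasDerivAt (fun u => ⟪D, y u - q u⟫) (⟪D, y1 t - q1 t⟫) t := by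
      simpa using (hasDerivAt_const t D).inner ℝ hE0
    have hI1 : HasDerivAt (fun u => ⟪D, y1 u - q1 u⟫) (⟪D, y2 t - q2 t⟫) t := by
      simpa using (hasDerivAt_const t D).inner ℝ hE1
    have hI2 : HasDerivAt (fun u => ⟪D, y2 u - q2 u⟫) (⟪D, y3 t - q3 t⟫) t := by
      simpa using (hasDerivAt_const t D).inner ℝ hE2
    have hs2 : HasDerivAt (fun u : ℝ => c*(u-T)^2) (c*(2*(t-T))) t := by
      have := (((hasDerivAt_id t).sub_const T).pow 2).const_mul c
      refine this.congr_deriv ?_; simp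
    have hs1 : HasDerivAt (fun u : ℝ => 2*c*(u-T)) (2*c) t := by
      have := ((hasDerivAt_id t).sub_const T).const_mul (2*c)
      refine this.congr_deriv ?_; ring
    have := ((hs2.mul hI2).sub (hs1.mul hI1)).add (hI0.const_mul (2*c))
    refine this.congr_deriv ?_
    rw [hW]; ring
  have hGcont : ContinuousOn G I := by
    rw [hG]
    apply ContinuousOn.add
    apply ContinuousOn.sub
    · exact ((continuous_const.mul ((continuous_id.sub continuous_const).pow 2)).continuousOn).mul
        (continuousOn_const.inner (hc2.sub hq2c.continuousOn))
    · exact ((continuous_const.mul (continuous_id.sub continuous_const)).continuousOn).mul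
        (continuousOn_const.inner (hc1.sub hq1c.continuousOn))
    · exact continuousOn_const.mul (continuousOn_const.inner (hc0.sub hq0c.continuousOn))
  have hWcont : ContinuousOn W I := by
    rw [hW]
    exact ((continuous_const.mul ((continuous_id.sub continuous_const).pow 2)).continuousOn).mul
      (continuousOn_const.inner (hc3.sub hq3c.continuousOn))
  have hWint : IntervalIntegrable W MeasureTheory.volume 0 T := by
    apply ContinuousOn.intervalIntegrable
    rwa [Set.uIcc_of_le hT.le]
  have hGT : G T = 0 := by
    rw [hG]; simp [hyT, hpT]
  have hG0 : G 0 = 0 := by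
    rw [hG]
    simp only [hy10, hy20, hy0]
    rw [hq2, hq1, hq]
    simp [hg00, hg10, hg20]
  have hcross : (∫ t in (0:ℝ)..T, W t) = 0 := by
    rw [intervalIntegral.integral_eq_sub_of_hasDerivAt_of_le hT.le hGcont hGd hWint, hGT, hG0]
    ring
  have hWeq : ∀ t, ⟪q3 t, y3 t - q3 t⟫ = W t := by
    intro t
    rw [hW, hq3, real_inner_smul_left, hg3eq t]
  -- integrability of pieces
  have hint1 : IntervalIntegrable (fun t => ‖q3 t‖^2) MeasureTheory.volume 0 T :=
    ((hq3c.norm.pow 2)).intervalIntegrable 0 T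
  have hint2 : IntervalIntegrable (fun t => 2 * ⟪q3 t, y3 t - q3 t⟫) MeasureTheory.volume 0 T := by
    apply ContinuousOn.intervalIntegrable
    rw [Set.uIcc_of_le hT.le]
    exact continuousOn_const.mul (hq3c.continuousOn.inner (hc3.sub hq3c.continuousOn))
  have hint3 : IntervalIntegrable (fun t => ‖y3 t - q3 t‖^2) MeasureTheory.volume 0 T := by
    apply ContinuousOn.intervalIntegrable
    rw [Set.uIcc_of_le hT.le]
    exact ((hc3.sub hq3c.continuousOn).norm).pow 2
  have hsq : ∀ t, ‖y3 t‖^2 = ‖q3 t‖^2 + (2 * ⟪q3 t, y3 t - q3 t⟫ + ‖y3 t - q3 t‖^2) := by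
    intro t
    have h := norm_add_sq_real (q3 t) (y3 t - q3 t)
    have he : q3 t + (y3 t - q3 t) = y3 t := by abel
    rw [he] at h
    linarith
  have hsplit : (∫ t in (0:ℝ)..T, ‖y3 t‖^2)
      = (∫ t in (0:ℝ)..T, ‖q3 t‖^2) + ((∫ t in (0:ℝ)..T, 2 * ⟪q3 t, y3 t - q3 t⟫)
        + ∫ t in (0:ℝ)..T, ‖y3 t - q3 t‖^2) := by
    rw [← intervalIntegral.integral_add hint2 hint3, ← intervalIntegral.integral_add hint1
      (hint2.add hint3)]
    exact intervalIntegral.integral_congr fun t _ => hsq t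
  have hzero : (∫ t in (0:ℝ)..T, 2 * ⟪q3 t, y3 t - q3 t⟫) = 0 := by
    have : (∫ t in (0:ℝ)..T, 2 * ⟪q3 t, y3 t - q3 t⟫)
        = 2 * ∫ t in (0:ℝ)..T, ⟪q3 t, y3 t - q3 t⟫ := intervalIntegral.integral_const_mul 2 _
    rw [this]
    have : (∫ t in (0:ℝ)..T, ⟪q3 t, y3 t - q3 t⟫) = ∫ t in (0:ℝ)..T, W t :=
      intervalIntegral.integral_congr fun t _ => hWeq t
    rw [this, hcross]; ring
  have hnonneg : 0 ≤ ∫ t in (0:ℝ)..T, ‖y3 t - q3 t‖^2 :=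
    intervalIntegral.integral_nonneg hT.le fun t _ => by positivity
  rw [hiter3]
  linarith [hsplit, hzero, hnonneg]
end
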